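/- In the linear contract setting, the map α ↦ u(α)/(1−α) is non-decreasing on [0,1): for any 0 ≤ α < α' < 1, u(α)/(1−α) ≤ u(α')/(1−α'). -/
import Mathlib

/-- In the linear contract setting, α ↦ u(α)/(1−α) is non-decreasing on [0,1):
for 0 ≤ α < α' < 1, u(α)/(1−α) ≤ u(α')/(1−α').
Here `V a = E_{X∼p(·|a)}[v(X)] ∈ [0,1]`, `c a ≥ 0` is the cost, `astar α` is the agent's
best response and `u α = (1−α)·V (astar α)`. -/
theorem linear_contract_normalized_utility_monotone
    {A : Type*} [Nonempty A]
    (V c : A → ℝ) (astar : ℝ → A)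
    (hV : ∀ a, V a ∈ Set.Icc (0:ℝ) 1) (hc : ∀ a, 0 ≤ c a)
    (hbr : ∀ (α : ℝ) (a : A), α * V a - c a ≤ α * V (astar α) - c (astar α))
    (u : ℝ → ℝ) (hu : ∀ α, u α = (1 - α) * V (astar α))
    (α α' : ℝ) (h0 : 0 ≤ α) (h1 : α < α') (h2 : α' < 1) :
    u α / (1 - α) ≤ u α' / (1 - α') := by
  have ha : (1:ℝ) - α > 0 := by linarith
  have ha' : (1:ℝ) - α' > 0 := by linarith
  rw [hu, hu, mul_div_cancel_left₀ _ (ne_of_gt ha), mul_div_cancel_left₀ _ (ne_of_gt ha')]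
  have h3 := hbr α (astar α')
  have h4 := hbr α' (astar α)
  nlinarith
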